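/- Let h ∈ ℂ with h ∉ 2πi·ℚ and q := exp(h). For ℓ, m ∈ ℂ such that q^{2m} ≠ −1, q^{2m+2} ≠ −1 and q^{2m−2} ≠ −1, set A²_{ℓ,m} := [ℓ+m+1]·[ℓ−m] / ((q^m+q^{−m})·(q^{m+1}+q^{−m−1})). Then [m]² + (q^{−2m} + q²)·A²_{ℓ,m} + (q^{2m} + q²)·A²_{ℓ,m−1} = [ℓ]² + q^{ℓ+1}·[ℓ]; in particular this expression is independent of m. -/

import Mathlib

set_option maxHeartbeats 2000000


/-- `q^b := exp(h·b)`. -/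
noncomputable def qpow (h b : ℂ) : ℂ := Complex.exp (h * b)

/-- the q-number `[b] := (q^b − q^{−b})/(q − q^{−1})` where `q = exp h`. -/
noncomputable def qnum (h b : ℂ) : ℂ :=
  (Complex.exp (h * b) - Complex.exp (-(h * b))) / (Complex.exp h - Complex.exp (-h))

/-- `A²_{ℓ,m} := [ℓ+m+1][ℓ−m]/((q^m+q^{−m})(q^{m+1}+q^{−m−1}))`. -/
noncomputable def Asq (h ℓ m : ℂ) : ℂ :=
  qnum h (ℓ + m + 1) * qnum h (ℓ - m) /
    ((qpow h m + qpow h (-m)) * (qpow h (m + 1) + qpow h (-(m + 1))))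

theorem stmt_13 (h : ℂ) (hh : ∀ r : ℚ, h ≠ 2 * Real.pi * Complex.I * r)
    (ℓ m : ℂ) (h1 : qpow h (2 * m) ≠ -1) (h2 : qpow h (2 * m + 2) ≠ -1)
    (h3 : qpow h (2 * m - 2) ≠ -1) :
    qnum h m ^ 2 + (qpow h (-(2 * m)) + qpow h 2) * Asq h ℓ m
        + (qpow h (2 * m) + qpow h 2) * Asq h ℓ (m - 1)
      = qnum h ℓ ^ 2 + qpow h (ℓ + 1) * qnum h ℓ := by
  have hx0 : Complex.exp h ≠ 0 := Complex.exp_ne_zero h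
  have hA0 : Complex.exp (h * ℓ) ≠ 0 := Complex.exp_ne_zero _
  have hB0 : Complex.exp (h * m) ≠ 0 := Complex.exp_ne_zero _
  have h2h : Complex.exp (2 * h) ≠ 1 := by
    intro e
    rcases Complex.exp_eq_one_iff.mp e with ⟨n, hn⟩
    apply hh ((n : ℚ) / 2)
    push_cast
    linear_combination hn / 2
  simp only [qpow] at h1 h2 h3
  simp only [Asq, qnum, qpow]
  rw [show h * (ℓ + m + 1) = h * ℓ + h * m + h from by ring,
    show h * (ℓ - m) = h * ℓ + -(h * m) from by ring,
    show h * (ℓ + (m - 1) + 1) = h * ℓ + h * m from by ring,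
    show h * (ℓ - (m - 1)) = h * ℓ + -(h * m) + h from by ring,
    show h * (m + 1) = h * m + h from by ring,
    show h * -(m + 1) = -(h * m + h) from by ring,
    show h * (m - 1) = h * m + -h from by ring,
    show h * -(m - 1) = -(h * m + -h) from by ring,
    show h * (m - 1 + 1) = h * m from by ring,
    show h * -(m - 1 + 1) = -(h * m) from by ring,
    show h * -(2 * m) = -(h * m + h * m) from by ring,
    show h * (2 : ℂ) = h + h from by ring,
    show h * (2 * m) = h * m + h * m from by ring,
    show h * -m = -(h * m) from by ring,
    show h * (ℓ + 1) = h * ℓ + h from by ring] at *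
  simp only [Complex.exp_add, Complex.exp_neg] at *
  set x := Complex.exp h
  set A := Complex.exp (h * ℓ)
  set B := Complex.exp (h * m)
  have hden : x - x⁻¹ ≠ 0 := by
    intro e
    apply h2h
    rw [two_mul, Complex.exp_add]
    field_simp at e
    linear_combination e
  have d1 : B + B⁻¹ ≠ 0 := by
    intro e
    apply h1
    field_simp at e
    linear_combination e
  have d2 : B * x + (B * x)⁻¹ ≠ 0 := by
    intro e
    apply h2
    rw [show h * (2 * m + 2) = (h * m + h) + (h * m + h) from by ring, Complex.exp_add,
      Complex.exp_add]
    field_simp at e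
    linear_combination e
  have d3 : B * x⁻¹ + (B * x⁻¹)⁻¹ ≠ 0 := by
    intro e
    apply h3
    rw [show h * (2 * m - 2) = (h * m + -h) + (h * m + -h) from by ring, Complex.exp_add,
      Complex.exp_add, Complex.exp_neg]
    field_simp at e ⊢
    linear_combination e
  have hx1 : x ^ 2 - 1 ≠ 0 := by
    intro e
    apply h2h
    rw [two_mul, Complex.exp_add]
    linear_combination e
  have n1 : B ^ 2 + 1 ≠ 0 := by
    intro e
    apply h1
    linear_combination e
  have n2 : B ^ 2 * x ^ 2 + 1 ≠ 0 := by
    intro e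
    apply h2
    rw [show h * (2 * m + 2) = (h * m + h) + (h * m + h) from by ring, Complex.exp_add,
      Complex.exp_add]
    linear_combination e
  have n3 : B ^ 2 + x ^ 2 ≠ 0 := by
    intro e
    apply h3
    rw [show h * (2 * m - 2) = (h * m + h * m) + -(h + h) from by ring]
    simp only [Complex.exp_add, Complex.exp_neg]
    field_simp
    linear_combination e
  rw [show x - x⁻¹ = (x ^ 2 - 1) / x from by field_simp,
    show B + B⁻¹ = (B ^ 2 + 1) / B from by field_simp,
    show B * x + (B * x)⁻¹ = (B ^ 2 * x ^ 2 + 1) / (B * x) from by field_simp,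
    show B * x⁻¹ + (B * x⁻¹)⁻¹ = (B ^ 2 + x ^ 2) / (B * x) from by field_simp]
  rw [show B - B⁻¹ = (B ^ 2 - 1) / B from by field_simp,
    show A * B * x - (A * B * x)⁻¹ = (A ^ 2 * B ^ 2 * x ^ 2 - 1) / (A * B * x) from by
      field_simp,
    show A * B⁻¹ - (A * B⁻¹)⁻¹ = (A ^ 2 - B ^ 2) / (A * B) from by field_simp,
    show A * B - (A * B)⁻¹ = (A ^ 2 * B ^ 2 - 1) / (A * B) from by field_simp,
    show A * B⁻¹ * x - (A * B⁻¹ * x)⁻¹ = (A ^ 2 * x ^ 2 - B ^ 2) / (A * B * x) from by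
      field_simp,
    show A - A⁻¹ = (A ^ 2 - 1) / A from by field_simp]
  set P := x ^ 2 - 1 with hP
  set Q := B ^ 2 + 1 with hQ
  set R := B ^ 2 * x ^ 2 + 1 with hR
  set S := B ^ 2 + x ^ 2 with hS
  clear_value P Q R S
  clear hden d1 d2 d3 h1 h2 h3 h2h hh
  field_simp
  have hC : B * B * (A * B * x * P * (A * B * P) * (Q * R)) ≠ 0 := by
    apply_rules [mul_ne_zero]
  have hE : A * B * P * (A * B * x * P) * (S * Q) ≠ 0 := by
    apply_rules [mul_ne_zero]
  rw [hP, hQ, hR, hS]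
  ring
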